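/- Let Γ' be a finite connected metric graph obtained from a finite connected metric graph Γ by adding extra vertices and edges (so Γ is an isometrically embedded subgraph of Γ'). If the first Betti numbers satisfy b₁(Γ') = b₁(Γ), then for any two points x, y of Γ, every shortest path from x to y in Γ' is contained in Γ; in particular the shortest-path distance in Γ' between points of Γ equals the shortest-path distance in Γ. -/

import Mathlib

/-- `IsWalk ends u l v` : the list of edges `l` is a walk from `u` to `v` (edges may be
traversed in either direction) in the multigraph with endpoint map `ends`. -/
inductive IsWalk {V E : Type*} (ends : E → V × V) : V → List E → V → Prop
  | nil (v : V) : IsWalk ends v [] v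
  | cons {u w v : V} (e : E) {l : List E} :
      (ends e = (u, w) ∨ ends e = (w, u)) → IsWalk ends w l v → IsWalk ends u (e :: l) v

/-- The total length of a walk. -/
def walkCost {E : Type*} (ℓ : E → ℝ) (l : List E) : ℝ := (l.map ℓ).sum


section helpers
variable {V E : Type*} (ends : E → V × V) (ℓ : E → ℝ)

lemma walkCost_cons (e : E) (l : List E) : walkCost ℓ (e :: l) = ℓ e + walkCost ℓ l := by
  simp [walkCost]

lemma walkCost_append (a b : List E) : walkCost ℓ (a ++ b) = walkCost ℓ a + walkCost ℓ b := by
  simp [walkCost]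

lemma walkCost_nonneg (hpos : ∀ e, 0 < ℓ e) (l : List E) : 0 ≤ walkCost ℓ l := by
  apply List.sum_nonneg; intro x hx
  obtain ⟨e, _, rfl⟩ := List.mem_map.1 hx
  exact (hpos e).le

lemma isWalk_append_split {u v : V} {a b : List E} (h : IsWalk ends u (a ++ b) v) :
    ∃ m, IsWalk ends u a m ∧ IsWalk ends m b v := by
  induction a generalizing u with
  | nil => exact ⟨u, IsWalk.nil u, h⟩
  | cons e a ih =>
    cases h with
    | cons _ he h' =>
      obtain ⟨m, h1, h2⟩ := ih h'
      exact ⟨m, IsWalk.cons e he h1, h2⟩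

lemma exists_nodup_walk (hpos : ∀ e, 0 < ℓ e) {u v : V} {l : List E} (h : IsWalk ends u l v) :
    ∃ l', IsWalk ends u l' v ∧ l'.Nodup ∧ (∀ f ∈ l', f ∈ l) ∧ walkCost ℓ l' ≤ walkCost ℓ l := by
  induction h with
  | nil v => exact ⟨[], IsWalk.nil v, List.nodup_nil, by simp, le_refl _⟩
  | @cons u w v e l he h ih =>
    obtain ⟨l', hw', hnd, hsub, hc⟩ := ih
    by_cases hel : e ∈ l'
    · obtain ⟨q, r, rfl⟩ := List.append_of_mem hel
      obtain ⟨c, hq, hfr⟩ := isWalk_append_split ends hw'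
      cases hfr with
      | @cons _ d _ _ _ he2 hr =>
        have hnd' : (e :: (q ++ r)).Nodup := List.nodup_middle.mp hnd
        have her : e ∉ r := fun hh => (List.nodup_cons.mp hnd').1 (List.mem_append_right q hh)
        have hrnd : r.Nodup := ((List.nodup_append'.mp hnd'.of_cons).2.1)
        have hq0 : 0 ≤ walkCost ℓ q := walkCost_nonneg ℓ hpos q
        have he0 : 0 ≤ ℓ e := (hpos e).le
        have hsubr : ∀ f ∈ r, f ∈ e :: l := fun f hf =>
          List.mem_cons_of_mem _ (hsub f (List.mem_append_right q (List.mem_cons_of_mem _ hf)))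
        have hcost : walkCost ℓ (q ++ e :: r) = walkCost ℓ q + (ℓ e + walkCost ℓ r) := by
          rw [walkCost_append, walkCost_cons]
        rcases he with he | he <;> rcases he2 with he2 | he2
        · -- ends e = (u,w), ends e = (c,d) : u = c, w = d ; take e :: r
          rw [he] at he2; injection he2 with h1 h2; subst h1; subst h2
          refine ⟨e :: r, IsWalk.cons e (Or.inl he) hr, List.nodup_cons.mpr ⟨her, hrnd⟩,
            ?_, ?_⟩
          · intro f hf; rcases List.mem_cons.mp hf with rfl | hf
            · exact List.mem_cons_self
            · exact hsubr f hf
          · rw [walkCost_cons, walkCost_cons]; rw [hcost] at hc; linarith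
        · -- ends e = (u,w), ends e = (d,c) : u = d, w = c ; take r
          rw [he] at he2; injection he2 with h1 h2; subst h1; subst h2
          refine ⟨r, hr, hrnd, hsubr, ?_⟩
          rw [walkCost_cons]; rw [hcost] at hc
          linarith
        · -- ends e = (w,u), ends e = (c,d) : w = c, u = d ; take r
          rw [he] at he2; injection he2 with h1 h2; subst h1; subst h2
          refine ⟨r, hr, hrnd, hsubr, ?_⟩
          rw [walkCost_cons]; rw [hcost] at hc
          linarith
        · -- ends e = (w,u), ends e = (d,c) : w = d, u = c ; take e :: r
          rw [he] at he2; injection he2 with h1 h2; subst h1; subst h2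
          refine ⟨e :: r, IsWalk.cons e (Or.inr he) hr, List.nodup_cons.mpr ⟨her, hrnd⟩,
            ?_, ?_⟩
          · intro f hf; rcases List.mem_cons.mp hf with rfl | hf
            · exact List.mem_cons_self
            · exact hsubr f hf
          · rw [walkCost_cons, walkCost_cons]; rw [hcost] at hc; linarith
    · exact ⟨e :: l', IsWalk.cons e he hw', List.nodup_cons.mpr ⟨hel, hnd⟩,
        fun f hf => by
          rcases List.mem_cons.mp hf with rfl | hf
          · exact List.mem_cons_self
          · exact List.mem_cons_of_mem _ (hsub f hf),
        by rw [walkCost_cons, walkCost_cons]; linarith [hc]⟩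

end helpers

section helpers2
variable {V E : Type*} (ends : E → V × V) (ℓ : E → ℝ)

lemma exists_incident {u y : V} {l : List E} (h : IsWalk ends u l y) (hne : u ≠ y) :
    ∃ f ∈ l, (ends f).1 = y ∨ (ends f).2 = y := by
  induction h with
  | nil v => exact absurd rfl hne
  | @cons u m v f l he h ih =>
    by_cases hm : m = v
    · subst hm
      refine ⟨f, List.mem_cons_self, ?_⟩
      rcases he with he | he
      · exact Or.inr (by rw [he])
      · exact Or.inl (by rw [he])
    · obtain ⟨g, hg, hgi⟩ := ih hm
      exact ⟨g, List.mem_cons_of_mem _ hg, hgi⟩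

lemma walk_stays {Ea Es : Set E} {Vs : Set V}
    (hEs : ∀ f ∈ Es, (ends f).1 ∈ Vs ∧ (ends f).2 ∈ Vs)
    (hF : ∀ f ∈ Ea, f ∉ Es → (ends f).1 ∉ Vs ∧ (ends f).2 ∉ Vs) :
    ∀ {u z : V} {l : List E}, IsWalk ends u l z → (∀ f ∈ l, f ∈ Ea) → u ∈ Vs → z ∈ Vs := by
  intro u z l h
  induction h with
  | nil v => exact fun _ h => h
  | @cons u m v f l he hw ih =>
    intro hl hu
    have hf : f ∈ Ea := hl f (List.mem_cons_self)
    have hfEs : f ∈ Es := by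
      by_contra hfn
      obtain ⟨h1, h2⟩ := hF f hf hfn
      rcases he with he | he
      · rw [he] at h1; exact h1 hu
      · rw [he] at h2; exact h2 hu
    obtain ⟨h1, h2⟩ := hEs f hfEs
    have hm : m ∈ Vs := by
      rcases he with he | he
      · rw [he] at h2; exact h2
      · rw [he] at h1; exact h1
    exact ih (fun g hg => hl g (List.mem_cons_of_mem _ hg)) hm

lemma avoid_leaf (hpos : ∀ e, 0 < ℓ e) {Ea : Set E} {v w : V} {e : E}
    (huniq : ∀ f ∈ Ea, ((ends f).1 = v ∨ (ends f).2 = v) → f = e)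
    (hew : ends e = (v, w) ∨ ends e = (w, v)) (hwv : w ≠ v) :
    ∀ (n : ℕ) (l : List E) (u y : V), l.length ≤ n → IsWalk ends u l y →
      (∀ f ∈ l, f ∈ Ea) → u ≠ v → y ≠ v →
      ∃ l', IsWalk ends u l' y ∧ (∀ f ∈ l', f ∈ Ea ∧ f ≠ e) ∧
        walkCost ℓ l' ≤ walkCost ℓ l ∧ (e ∈ l → walkCost ℓ l' < walkCost ℓ l) := by
  intro n
  induction n with
  | zero =>
    intro l u y hlen hw _ _ _
    have hl : l = [] := List.eq_nil_of_length_eq_zero (Nat.le_zero.mp hlen)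
    subst hl
    cases hw
    exact ⟨[], IsWalk.nil _, by simp, le_refl _, by simp⟩
  | succ n ih =>
    intro l u y hlen hw hEa huv hyv
    cases hw with
    | nil => exact ⟨[], IsWalk.nil _, by simp, le_refl _, by simp⟩
    | @cons _ m _ f t hf ht =>
      by_cases hfe : f = e
      · rw [hfe] at hf
        have hmu : m = v ∧ u = w := by
          rcases hew with hew | hew <;> rcases hf with hf | hf <;>
            rw [hew] at hf <;> injection hf with a b
          · exact absurd a.symm huv
          · exact ⟨a.symm, b.symm⟩
          · exact ⟨b.symm, a.symm⟩
          · exact absurd b.symm huv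
        obtain ⟨hm, hu⟩ := hmu
        rw [hm] at ht
        cases ht with
        | nil => exact absurd rfl hyv
        | @cons _ m2 _ g t2 hg ht2 =>
          have hgEa : g ∈ Ea := hEa g (List.mem_cons_of_mem _ (List.mem_cons_self))
          have hge : g = e := by
            apply huniq g hgEa
            rcases hg with hg | hg
            · exact Or.inl (by rw [hg])
            · exact Or.inr (by rw [hg])
          rw [hge] at hg
          have hm2 : m2 = w := by
            rcases hew with hew | hew <;> rcases hg with hg | hg <;>
              rw [hew] at hg <;> injection hg with a b
            · exact b.symm
            · exact absurd b hwv
            · exact absurd a hwv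
            · exact a.symm
          rw [hm2] at ht2
          obtain ⟨l', hw', hprop, hcost, _⟩ :=
            ih t2 w y (by simp at hlen ⊢; omega) ht2
              (fun g hg => hEa g (List.mem_cons_of_mem _ (List.mem_cons_of_mem _ hg))) hwv hyv
          refine ⟨l', by rw [hu]; exact hw', hprop, ?_, fun _ => ?_⟩ <;>
            · rw [walkCost_cons, walkCost_cons]
              linarith [hpos f, hpos g]
      · have hmv : m ≠ v := by
          intro hmv
          apply hfe
          apply huniq f (hEa f (List.mem_cons_self))
          subst hmv
          rcases hf with hf | hf
          · exact Or.inr (by rw [hf])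
          · exact Or.inl (by rw [hf])
        obtain ⟨l', hw', hprop, hcost, hstrict⟩ :=
          ih t m y (by simp at hlen ⊢; omega) ht
            (fun g hg => hEa g (List.mem_cons_of_mem _ hg)) hmv hyv
        refine ⟨f :: l', IsWalk.cons f hf hw', ?_, ?_, ?_⟩
        · intro g hg
          rcases List.mem_cons.mp hg with rfl | hg
          · exact ⟨hEa g (List.mem_cons_self), hfe⟩
          · exact hprop g hg
        · rw [walkCost_cons, walkCost_cons]; linarith
        · intro hel
          have het : e ∈ t := by
            rcases List.mem_cons.mp hel with rfl | h
            · exact absurd rfl hfe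
            · exact h
          rw [walkCost_cons, walkCost_cons]
          linarith [hstrict het]

end helpers2

section counting
variable {V E : Type*}

lemma counting [DecidableEq V] [DecidableEq E] (ends : E → V × V)
    (Out : Finset V) (F Ea : Finset E) (hFEa : F ⊆ Ea)
    (hcard : Out.card = F.card)
    (hout : ∀ f ∈ Ea, f ∉ F → (ends f).1 ∉ Out ∧ (ends f).2 ∉ Out)
    (hdeg : ∀ v ∈ Out, 2 ≤ ∑ f ∈ Ea,
      ((if (ends f).1 = v then 1 else 0) + (if (ends f).2 = v then 1 else 0))) :
    ∀ f ∈ F, (ends f).1 ∈ Out ∧ (ends f).2 ∈ Out := by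
  classical
  set c : E → ℕ := fun f =>
    (if (ends f).1 ∈ Out then 1 else 0) + (if (ends f).2 ∈ Out then 1 else 0) with hc
  have hswap : ∑ v ∈ Out, ∑ f ∈ Ea,
      ((if (ends f).1 = v then 1 else 0) + (if (ends f).2 = v then 1 else 0))
      = ∑ f ∈ Ea, c f := by
    rw [Finset.sum_comm]
    refine Finset.sum_congr rfl fun f _ => ?_
    rw [Finset.sum_add_distrib]
    simp [hc, Finset.sum_ite_eq]
  have hlow : 2 * Out.card ≤ ∑ f ∈ Ea, c f := by
    rw [← hswap]
    calc 2 * Out.card = ∑ _v ∈ Out, 2 := by rw [Finset.sum_const, smul_eq_mul, mul_comm]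
    _ ≤ _ := Finset.sum_le_sum hdeg
  have hEaF : ∑ f ∈ Ea, c f = ∑ f ∈ F, c f := by
    rw [← Finset.sum_subset hFEa]
    intro f hf hfn
    obtain ⟨h1, h2⟩ := hout f hf hfn
    simp [hc, h1, h2]
  have hub : ∀ f ∈ F, c f ≤ 2 := by
    intro f _
    simp only [hc]
    split_ifs <;> omega
  intro f hfF
  by_contra hcon
  have hclt : c f < 2 := by
    simp only [hc]
    rcases not_and_or.mp hcon with h | h <;> simp [h] <;> split_ifs <;> omega
  have : ∑ g ∈ F, c g < ∑ _g ∈ F, 2 :=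
    Finset.sum_lt_sum hub ⟨f, hfF, hclt⟩
  rw [Finset.sum_const, smul_eq_mul] at this
  omega

end counting

section main
variable {V E : Type*} [Fintype V] [Fintype E]

lemma aux_main (ends : E → V × V) (ℓ : E → ℝ) (hpos : ∀ e, 0 < ℓ e)
    (Vs : Set V) (Es : Set E) (hVne : Vs.Nonempty)
    (hends : ∀ e ∈ Es, (ends e).1 ∈ Vs ∧ (ends e).2 ∈ Vs) :
    ∀ (n : ℕ) (Va : Set V) (Ea : Set E), Ea.ncard ≤ n → Vs ⊆ Va → Es ⊆ Ea →
      (∀ e ∈ Ea, (ends e).1 ∈ Va ∧ (ends e).2 ∈ Va) →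
      (∀ u ∈ Va, ∀ v ∈ Va, ∃ l, IsWalk ends u l v ∧ ∀ e ∈ l, e ∈ Ea) →
      ((Ea.ncard : ℤ) - Va.ncard = (Es.ncard : ℤ) - Vs.ncard) →
      ∀ x ∈ Vs, ∀ y ∈ Vs, ∀ l, IsWalk ends x l y → (∀ e ∈ l, e ∈ Ea) →
        (∀ l', IsWalk ends x l' y → (∀ e ∈ l', e ∈ Ea) → walkCost ℓ l ≤ walkCost ℓ l') →
        ∀ e ∈ l, e ∈ Es := by
  classical
  intro n
  induction n with
  | zero =>
    intro Va Ea hn _ _ _ _ _ x _ y _ l _ hlEa _ e hel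
    have hEa : Ea = ∅ := (Set.ncard_eq_zero (Set.toFinite Ea)).mp (Nat.le_zero.mp hn)
    exact absurd (hlEa e hel) (by rw [hEa]; exact Set.notMem_empty e)
  | succ n ih =>
    intro Va Ea hn hVsVa hEsEa hEaVa hconnVa hbetti x hx y hy l hwl hlEa hmin
    by_cases hVa : Va ⊆ Vs
    · have hV : Vs = Va := hVsVa.antisymm hVa
      have hcard : Ea.ncard = Es.ncard := by rw [hV] at hbetti; omega
      have hE : Es = Ea :=
        Set.eq_of_subset_of_ncard_le hEsEa (le_of_eq hcard) (Set.toFinite Ea)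
      intro e hel; rw [hE]; exact hlEa e hel
    · obtain ⟨v0, hv0Va, hv0Vs⟩ := Set.not_subset.mp hVa
      obtain ⟨u0, hu0⟩ := hVne
      have hOutF : (Va \ Vs).ncard = (Ea \ Es).ncard := by
        have h1 : Vs.ncard ≤ Va.ncard := Set.ncard_le_ncard hVsVa (Set.toFinite Va)
        have h2 : Es.ncard ≤ Ea.ncard := Set.ncard_le_ncard hEsEa (Set.toFinite Ea)
        have h3 : (Va \ Vs).ncard = Va.ncard - Vs.ncard := Set.ncard_diff hVsVa
        have h4 : (Ea \ Es).ncard = Ea.ncard - Es.ncard := Set.ncard_diff hEsEa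
        omega
      set EaF : Finset E := (Set.toFinite Ea).toFinset with hEaF
      set deg : V → ℕ := fun v => ∑ f ∈ EaF,
        ((if (ends f).1 = v then 1 else 0) + (if (ends f).2 = v then 1 else 0)) with hdegdef
      by_cases hleaf : ∃ v ∈ Va \ Vs, deg v ≤ 1
      · -- remove the leaf and recurse
        obtain ⟨v, hvOut, hdegv⟩ := hleaf
        have hvVa : v ∈ Va := hvOut.1
        have hvVs : v ∉ Vs := hvOut.2
        -- find an edge incident to v
        obtain ⟨l0, hwl0, hl0Ea⟩ := hconnVa u0 (hVsVa hu0) v hvVa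
        obtain ⟨e, hel0, hinc⟩ := exists_incident ends hwl0 (fun h => hvVs (h ▸ hu0))
        have heEa : e ∈ Ea := hl0Ea e hel0
        have heEaF : e ∈ EaF := by rw [hEaF, Set.Finite.mem_toFinset]; exact heEa
        have hterm : ∀ f : E, ((ends f).1 = v ∨ (ends f).2 = v) →
            1 ≤ (if (ends f).1 = v then 1 else 0) + (if (ends f).2 = v then 1 else 0) := by
          intro f hf
          rcases hf with hf | hf <;> simp [hf]
        have huniq : ∀ f ∈ Ea, ((ends f).1 = v ∨ (ends f).2 = v) → f = e := by
          intro f hfEa hfinc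
          by_contra hfe
          have hsub : ({e, f} : Finset E) ⊆ EaF := by
            intro g hg
            rw [hEaF, Set.Finite.mem_toFinset]
            rcases Finset.mem_insert.mp hg with rfl | hg
            · exact heEa
            · rw [Finset.mem_singleton.mp hg]; exact hfEa
          have h2 : 2 ≤ deg v := by
            calc (2 : ℕ) ≤ ∑ g ∈ ({e, f} : Finset E),
                ((if (ends g).1 = v then 1 else 0) + (if (ends g).2 = v then 1 else 0)) := by
                  rw [Finset.sum_pair (fun h => hfe h.symm)]
                  have := hterm e hinc
                  have := hterm f hfinc
                  omega
            _ ≤ deg v := Finset.sum_le_sum_of_subset hsub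
          omega
        have hnotboth : ¬((ends e).1 = v ∧ (ends e).2 = v) := by
          rintro ⟨h1, h2⟩
          have h2' : 2 ≤ deg v := by
            calc (2:ℕ) = (if (ends e).1 = v then 1 else 0) + (if (ends e).2 = v then 1 else 0) := by
                  simp [h1, h2]
            _ ≤ deg v := Finset.single_le_sum (f := fun f =>
                  (if (ends f).1 = v then 1 else 0) + (if (ends f).2 = v then 1 else 0))
                  (fun i _ => Nat.zero_le _) heEaF
          omega
        -- the other endpoint w
        obtain ⟨w, hew, hwv⟩ : ∃ w, (ends e = (v, w) ∨ ends e = (w, v)) ∧ w ≠ v := by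
          rcases hinc with h1 | h2
          · refine ⟨(ends e).2, Or.inl ?_, fun h => hnotboth ⟨h1, h⟩⟩
            rw [← h1]
          · refine ⟨(ends e).1, Or.inr ?_, fun h => hnotboth ⟨h, h2⟩⟩
            rw [← h2]
        have heEs : e ∉ Es := by
          intro heEs
          obtain ⟨h1, h2⟩ := hends e heEs
          rcases hinc with h | h
          · exact hvVs (h ▸ h1)
          · exact hvVs (h ▸ h2)
        -- cardinality facts
        have hEapos : 0 < Ea.ncard := (Set.ncard_pos (Set.toFinite Ea)).mpr ⟨e, heEa⟩
        have hVapos : 0 < Va.ncard := (Set.ncard_pos (Set.toFinite Va)).mpr ⟨v, hvVa⟩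
        have hEa' : (Ea \ {e}).ncard = Ea.ncard - 1 := Set.ncard_diff_singleton_of_mem heEa
        have hVa' : (Va \ {v}).ncard = Va.ncard - 1 := Set.ncard_diff_singleton_of_mem hvVa
        -- e is not on the minimal walk l
        have hxv : x ≠ v := fun h => hvVs (h ▸ hx)
        have hyv : y ≠ v := fun h => hvVs (h ▸ hy)
        have hnotel : e ∉ l := by
          intro hel
          obtain ⟨l'', hw'', hprop'', _, hstrict⟩ :=
            avoid_leaf ends ℓ hpos huniq hew hwv l.length l x y (le_refl _) hwl hlEa hxv hyv
          have := hmin l'' hw'' (fun f hf => (hprop'' f hf).1)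
          linarith [hstrict hel]
        -- apply the induction hypothesis to the smaller graph
        refine ih (Va \ {v}) (Ea \ {e}) (by omega) ?_ ?_ ?_ ?_ (by omega) x hx y hy l hwl ?_ ?_
        · exact fun z hz => ⟨hVsVa hz, fun h => hvVs (h ▸ hz)⟩
        · exact fun f hf => ⟨hEsEa hf, fun h => heEs (h ▸ hf)⟩
        · intro f hf
          obtain ⟨hfEa, hfe⟩ := hf
          obtain ⟨h1, h2⟩ := hEaVa f hfEa
          constructor
          · exact ⟨h1, fun h => hfe (Set.mem_singleton_iff.mpr (huniq f hfEa (Or.inl h)))⟩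
          · exact ⟨h2, fun h => hfe (Set.mem_singleton_iff.mpr (huniq f hfEa (Or.inr h)))⟩
        · intro a ha b hb
          obtain ⟨l1, hwl1, hl1⟩ := hconnVa a ha.1 b hb.1
          have hav : a ≠ v := fun h => ha.2 (Set.mem_singleton_iff.mpr h)
          have hbv : b ≠ v := fun h => hb.2 (Set.mem_singleton_iff.mpr h)
          obtain ⟨l2, hwl2, hprop2, _, _⟩ :=
            avoid_leaf ends ℓ hpos huniq hew hwv l1.length l1 a b (le_refl _) hwl1 hl1 hav hbv
          exact ⟨l2, hwl2, fun f hf => ⟨(hprop2 f hf).1, fun h =>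
            (hprop2 f hf).2 (Set.mem_singleton_iff.mp h)⟩⟩
        · exact fun f hf => ⟨hlEa f hf, fun h => hnotel (Set.mem_singleton_iff.mp h ▸ hf)⟩
        · intro l' hwl' hl'
          exact hmin l' hwl' (fun f hf => (hl' f hf).1)
      · -- no leaf : contradiction with connectivity
        exfalso
        push_neg at hleaf
        have hcnt := counting ends (Set.toFinite (Va \ Vs)).toFinset
          (Set.toFinite (Ea \ Es)).toFinset EaF ?_ ?_ ?_ ?_
        · have hF' : ∀ f ∈ Ea, f ∉ Es → (ends f).1 ∉ Vs ∧ (ends f).2 ∉ Vs := by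
            intro f hfEa hfEs
            have hf : f ∈ Ea \ Es := ⟨hfEa, hfEs⟩
            have := hcnt f (by rw [Set.Finite.mem_toFinset]; exact hf)
            rw [Set.Finite.mem_toFinset, Set.Finite.mem_toFinset] at this
            exact ⟨this.1.2, this.2.2⟩
          obtain ⟨l0, hwl0, hl0⟩ := hconnVa u0 (hVsVa hu0) v0 hv0Va
          exact hv0Vs (walk_stays ends hends hF' hwl0 hl0 hu0)
        · intro f hf
          rw [Set.Finite.mem_toFinset] at hf
          rw [hEaF, Set.Finite.mem_toFinset]
          exact hf.1
        · rw [← Set.ncard_eq_toFinset_card (Va \ Vs), ← Set.ncard_eq_toFinset_card (Ea \ Es)]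
          exact hOutF
        · intro f hf hfn
          rw [hEaF, Set.Finite.mem_toFinset] at hf
          rw [Set.Finite.mem_toFinset] at hfn
          have hfEs : f ∈ Es := by
            by_contra h
            exact hfn ⟨hf, h⟩
          obtain ⟨h1, h2⟩ := hends f hfEs
          rw [Set.Finite.mem_toFinset, Set.Finite.mem_toFinset]
          exact ⟨fun h => h.2 h1, fun h => h.2 h2⟩
        · intro v hv
          rw [Set.Finite.mem_toFinset] at hv
          exact hleaf v hv

end main

/-- Let `Γ'` be a finite connected metric graph (vertex type `V'`, edge
type `E'`, positive edge lengths `ℓ`), and `Γ` a connected subgraph given by vertex set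
`Vs` and edge set `Es` (with the same lengths). If the first Betti numbers agree, i.e.
`#E' − #V' = #Es − #Vs` (the cyclomatic numbers coincide), then every shortest path in `Γ'`
between two points of `Γ` is contained in `Γ`, and the shortest-path distance in `Γ'`
between points of `Γ` equals the shortest-path distance in `Γ`. -/
theorem subgraph_same_betti_isometric {V' E' : Type*} [Fintype V'] [Fintype E']
    (ends : E' → V' × V') (ℓ : E' → ℝ) (hpos : ∀ e, 0 < ℓ e)
    (Vs : Set V') (Es : Set E') (hVne : Vs.Nonempty)
    (hends : ∀ e ∈ Es, (ends e).1 ∈ Vs ∧ (ends e).2 ∈ Vs)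
    (hconn' : ∀ u v : V', ∃ l, IsWalk ends u l v)
    (hconn : ∀ u ∈ Vs, ∀ v ∈ Vs, ∃ l, IsWalk ends u l v ∧ ∀ e ∈ l, e ∈ Es)
    (hbetti : (Fintype.card E' : ℤ) - Fintype.card V' = (Es.ncard : ℤ) - Vs.ncard) :
    ∀ x ∈ Vs, ∀ y ∈ Vs,
      (∀ l, IsWalk ends x l y →
        (∀ l', IsWalk ends x l' y → walkCost ℓ l ≤ walkCost ℓ l') →
        ∀ e ∈ l, e ∈ Es) ∧
      sInf {c | ∃ l, IsWalk ends x l y ∧ walkCost ℓ l = c}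
        = sInf {c | ∃ l, (IsWalk ends x l y ∧ ∀ e ∈ l, e ∈ Es) ∧ walkCost ℓ l = c} := by
  
  classical
  intro x hx y hy
  have huniv : ∀ l : List E', ∀ e ∈ l, e ∈ (Set.univ : Set E') := fun l e _ => Set.mem_univ e
  have hbetti' : ((Set.univ : Set E').ncard : ℤ) - (Set.univ : Set V').ncard
      = (Es.ncard : ℤ) - Vs.ncard := by
    rw [Set.ncard_univ, Set.ncard_univ, Nat.card_eq_fintype_card, Nat.card_eq_fintype_card]
    exact hbetti
  have hmain : ∀ l, IsWalk ends x l y →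
      (∀ l', IsWalk ends x l' y → walkCost ℓ l ≤ walkCost ℓ l') →
      ∀ e ∈ l, e ∈ Es := by
    intro l hwl hminl
    exact aux_main ends ℓ hpos Vs Es hVne hends (Set.univ.ncard) Set.univ Set.univ
      (le_refl _) (Set.subset_univ _) (Set.subset_univ _)
      (fun e _ => ⟨Set.mem_univ _, Set.mem_univ _⟩)
      (fun u _ v _ => by obtain ⟨l0, h0⟩ := hconn' u v; exact ⟨l0, h0, huniv l0⟩)
      hbetti' x hx y hy l hwl (huniv l)
      (fun l' hwl' _ => hminl l' hwl')
  refine ⟨hmain, ?_⟩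
  -- existence of a globally minimal walk
  obtain ⟨l0, hl0⟩ := hconn' x y
  have hSfin : {l : List E' | IsWalk ends x l y ∧ l.Nodup}.Finite := by
    apply (List.finite_length_le E' (Fintype.card E')).subset
    intro l hl
    exact hl.2.length_le_card
  obtain ⟨m0, hm0w, hm0nd, _, _⟩ := exists_nodup_walk ends ℓ hpos hl0
  obtain ⟨m, hmS, hmmin⟩ := Set.exists_min_image _ (walkCost ℓ) hSfin ⟨m0, hm0w, hm0nd⟩
  have hglobal : ∀ l', IsWalk ends x l' y → walkCost ℓ m ≤ walkCost ℓ l' := by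
    intro l' hwl'
    obtain ⟨l'', hw'', hnd'', _, hc''⟩ := exists_nodup_walk ends ℓ hpos hwl'
    exact le_trans (hmmin l'' ⟨hw'', hnd''⟩) hc''
  have hmEs : ∀ e ∈ m, e ∈ Es := hmain m hmS.1 hglobal
  set A : Set ℝ := {c | ∃ l, IsWalk ends x l y ∧ walkCost ℓ l = c} with hA
  set B : Set ℝ := {c | ∃ l, (IsWalk ends x l y ∧ ∀ e ∈ l, e ∈ Es) ∧ walkCost ℓ l = c} with hB
  have hBA : B ⊆ A := by
    rintro c ⟨l, ⟨hwl, _⟩, hc⟩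
    exact ⟨l, hwl, hc⟩
  have hAbdd : BddBelow A := by
    refine ⟨0, fun c hc => ?_⟩
    obtain ⟨l, _, hc⟩ := hc
    exact hc ▸ walkCost_nonneg ℓ hpos l
  have hAne : A.Nonempty := ⟨walkCost ℓ l0, l0, hl0, rfl⟩
  have hBne : B.Nonempty := by
    obtain ⟨l1, hwl1, hl1⟩ := hconn x hx y hy
    exact ⟨walkCost ℓ l1, l1, ⟨hwl1, hl1⟩, rfl⟩
  have hmA : walkCost ℓ m ∈ A := ⟨m, hmS.1, rfl⟩
  have hmB : walkCost ℓ m ∈ B := ⟨m, ⟨hmS.1, hmEs⟩, rfl⟩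
  have h1 : sInf A = walkCost ℓ m := by
    refine le_antisymm (csInf_le hAbdd hmA) (le_csInf hAne ?_)
    rintro c ⟨l, hwl, rfl⟩
    exact hglobal l hwl
  have h2 : sInf B ≤ walkCost ℓ m := csInf_le (hAbdd.mono hBA) hmB
  have h3 : sInf A ≤ sInf B := csInf_le_csInf hAbdd hBne hBA
  rw [h1] at h3 ⊢
  exact le_antisymm h3 (h2.trans_eq rfl)
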